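/- (GD condition for the generalized linear model, first-order form.) Consider the generalized linear model setting: ‖·‖ a norm on R^d with dual ‖·‖_*, X = {x ∈ R^d : ‖x‖ ≤ R}, W = {w ∈ R^d : ‖w‖_* ≤ B}, Y = {0,1}, link σ : R → [0,1], loss ℓ(w;x,y) = (σ(⟨w,x⟩) − y)², and population risk L_D(w) = E_{(x,y)~D} ℓ(w;x,y) for a distribution D on X×Y. Assume on S = [−BR, BR]: (a) max{σ'(s), σ''(s)} ≤ C_σ with C_σ ≥ 1; (b) σ'(s) ≥ c_σ > 0; and (c) E[y | x] = σ(⟨w*,x⟩) for some w* ∈ W. Then for all w ∈ W: L_D(w) − L_D(w*) ≤ (B·C_σ/c_σ)·‖∇L_D(w)‖. -/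

import Mathlib

open MeasureTheory Finset
open scoped RealInnerProductSpace

noncomputable section

/-- `Euc d` is Euclidean space `ℝ^d`. -/
abbrev Euc (d : ℕ) : Type := EuclideanSpace ℝ (Fin d)

/-- Expectation over i.i.d. Rademacher signs `ε ∈ {±1}ⁿ`. -/
def Esign (n : ℕ) (f : (Fin n → ℝ) → ℝ) : ℝ :=
  (∑ ε : Fin n → Bool, f (fun t => if ε t then 1 else -1)) / 2 ^ n

/-- A (genuine) norm on `ℝ^d`, given as an arbitrary real-valued function. -/
def IsNorm {d : ℕ} (N : Euc d → ℝ) : Prop :=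
  (∀ x y, N (x + y) ≤ N x + N y) ∧ (∀ (a : ℝ) (x : Euc d), N (a • x) = |a| * N x) ∧
    (∀ x, N x = 0 → x = 0)

/-- The dual norm of `N`: `‖w‖_* = sup {⟨w,x⟩ : N x ≤ 1}`. -/
def dualNorm {d : ℕ} (N : Euc d → ℝ) (w : Euc d) : ℝ :=
  sSup {r : ℝ | ∃ x : Euc d, N x ≤ 1 ∧ r = ⟪w, x⟫}

variable {d : ℕ} {N : Euc d → ℝ}

lemma N_zero (hN : IsNorm N) : N 0 = 0 := by
  have := hN.2.1 0 0; simpa using this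

lemma N_neg (hN : IsNorm N) (x : Euc d) : N (-x) = N x := by
  have := hN.2.1 (-1) x; simpa using this

lemma N_nonneg (hN : IsNorm N) (x : Euc d) : 0 ≤ N x := by
  have h := hN.1 x (-x)
  rw [add_neg_cancel, N_zero hN, N_neg hN] at h
  linarith

lemma N_le_norm (hN : IsNorm N) : ∃ K ≥ 0, ∀ x, N x ≤ K * ‖x‖ := by
  classical
  refine ⟨∑ i : Fin d, N (EuclideanSpace.single i 1), Finset.sum_nonneg fun i _ => N_nonneg hN _, fun x => ?_⟩
  have hrepr : x = ∑ i : Fin d, x i • EuclideanSpace.single i (1:ℝ) := by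
    have := (EuclideanSpace.basisFun (Fin d) ℝ).sum_repr x
    simp only [EuclideanSpace.basisFun_repr, EuclideanSpace.basisFun_apply] at this
    exact this.symm
  have hsum : ∀ (s : Finset (Fin d)), N (∑ i ∈ s, x i • EuclideanSpace.single i (1:ℝ))
        ≤ ∑ i ∈ s, |x i| * N (EuclideanSpace.single i 1) := by
    intro s
    induction s using Finset.induction with
    | empty => simp [N_zero hN]
    | insert _ _ h ih =>
      rw [Finset.sum_insert h, Finset.sum_insert h]
      refine (hN.1 _ _).trans ?_
      rw [hN.2.1]
      linarith
  calc N x ≤ ∑ i : Fin d, |x i| * N (EuclideanSpace.single i 1) := by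
        conv_lhs => rw [hrepr]
        exact hsum Finset.univ
    _ ≤ ∑ i : Fin d, ‖x‖ * N (EuclideanSpace.single i 1) := by
        refine Finset.sum_le_sum fun i _ => ?_
        have h1 : |x i| ≤ ‖x‖ := by
          calc |x i| = ‖(⟪EuclideanSpace.single i (1:ℝ), x⟫ : ℝ)‖ := by
                rw [EuclideanSpace.inner_single_left]; simp [Real.norm_eq_abs]
            _ ≤ ‖EuclideanSpace.single i (1:ℝ)‖ * ‖x‖ := norm_inner_le_norm _ _
            _ = ‖x‖ := by rw [EuclideanSpace.norm_single]; simp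
        exact mul_le_mul_of_nonneg_right h1 (N_nonneg hN _)
    _ = (∑ i : Fin d, N (EuclideanSpace.single i 1)) * ‖x‖ := by rw [Finset.sum_mul]; congr 1; ext i; ring

lemma N_continuous (hN : IsNorm N) : Continuous N := by
  obtain ⟨K, hK0, hK⟩ := N_le_norm hN
  have : LipschitzWith (Real.toNNReal K) N := by
    refine LipschitzWith.of_dist_le_mul fun x y => ?_
    have h1 : N x - N y ≤ N (x - y) := by
      have := hN.1 (x - y) y; simp at this; linarith
    have h2 : N y - N x ≤ N (x - y) := by
      have h3 := hN.1 (y - x) x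
      simp only [sub_add_cancel] at h3
      have h4 := N_neg hN (y - x)
      rw [neg_sub] at h4
      linarith
    rw [Real.dist_eq, dist_eq_norm, Real.coe_toNNReal _ hK0]
    have := hK (x - y)
    have := N_nonneg hN (x - y)
    rw [abs_le]
    constructor <;> nlinarith
  exact this.continuous

lemma N_lower (hN : IsNorm N) : ∃ c > (0:ℝ), ∀ x, c * ‖x‖ ≤ N x := by
  rcases subsingleton_or_nontrivial (Euc d) with hss | hnt
  · exact ⟨1, one_pos, fun x => by
      rw [Subsingleton.elim x 0]; simp [N_zero hN]⟩
  · have hsne : (Metric.sphere (0 : Euc d) 1).Nonempty :=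
      NormedSpace.sphere_nonempty.2 zero_le_one
    obtain ⟨z, hz, hzmin⟩ := (isCompact_sphere (0 : Euc d) 1).exists_isMinOn hsne
      ((N_continuous hN).continuousOn)
    have hz1 : ‖z‖ = 1 := by simpa using hz
    have hc : 0 < N z := by
      rcases lt_or_eq_of_le (N_nonneg hN z) with h | h
      · exact h
      · exfalso
        have := hN.2.2 z h.symm
        rw [this] at hz1; simp at hz1
    refine ⟨N z, hc, fun x => ?_⟩
    rcases eq_or_ne x 0 with rfl | hx
    · simp [N_zero hN]
    · have hnx : (0:ℝ) < ‖x‖ := norm_pos_iff.2 hx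
      have hu : (‖x‖⁻¹ • x) ∈ Metric.sphere (0 : Euc d) 1 := by
        simp [norm_smul, abs_of_pos (inv_pos.2 hnx), inv_mul_cancel₀ hnx.ne']
      have h1 : N z ≤ N (‖x‖⁻¹ • x) := hzmin hu
      have h2 : N (‖x‖⁻¹ • x) = ‖x‖⁻¹ * N x := by
        rw [hN.2.1, abs_of_pos (inv_pos.2 hnx)]
      rw [h2] at h1
      calc N z * ‖x‖ ≤ (‖x‖⁻¹ * N x) * ‖x‖ := by nlinarith
        _ = N x := by field_simp

lemma dual_setNE (hN : IsNorm N) (w : Euc d) :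
    (0:ℝ) ∈ {r : ℝ | ∃ x : Euc d, N x ≤ 1 ∧ r = ⟪w, x⟫} :=
  ⟨0, by simp [N_zero hN], by simp⟩

lemma dual_bdd (hN : IsNorm N) {c : ℝ} (hc : 0 < c) (hcl : ∀ x, c * ‖x‖ ≤ N x) (w : Euc d) :
    BddAbove {r : ℝ | ∃ x : Euc d, N x ≤ 1 ∧ r = ⟪w, x⟫} := by
  refine ⟨‖w‖ * c⁻¹, fun r hr => ?_⟩
  obtain ⟨x, hx, rfl⟩ := hr
  have h1 : ⟪w, x⟫ ≤ ‖w‖ * ‖x‖ := real_inner_le_norm w x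
  have h2 := hcl x
  have h3 : ‖x‖ ≤ c⁻¹ := by
    rw [← mul_le_mul_iff_right₀ hc, mul_inv_cancel₀ hc.ne']; linarith
  nlinarith [norm_nonneg w, norm_nonneg x]

lemma dual_nonneg (hN : IsNorm N) {c : ℝ} (hc : 0 < c) (hcl : ∀ x, c * ‖x‖ ≤ N x) (w : Euc d) :
    0 ≤ dualNorm N w :=
  le_csSup (dual_bdd hN hc hcl w) (dual_setNE hN w)

lemma inner_le_dual (hN : IsNorm N) {c : ℝ} (hc : 0 < c) (hcl : ∀ x, c * ‖x‖ ≤ N x)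
    (w x : Euc d) : ⟪w, x⟫ ≤ dualNorm N w * N x := by
  rcases eq_or_lt_of_le (N_nonneg hN x) with h | h
  · have hx0 : x = 0 := hN.2.2 x h.symm
    subst hx0
    rw [N_zero hN]
    simp
  · have hmem : ⟪w, (N x)⁻¹ • x⟫ ∈ {r : ℝ | ∃ y : Euc d, N y ≤ 1 ∧ r = ⟪w, y⟫} := by
      refine ⟨(N x)⁻¹ • x, ?_, rfl⟩
      rw [hN.2.1, abs_of_pos (inv_pos.2 h), inv_mul_cancel₀ h.ne']
    have h2 := le_csSup (dual_bdd hN hc hcl w) hmem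
    rw [real_inner_smul_right] at h2
    calc ⟪w, x⟫ = ((N x)⁻¹ * ⟪w, x⟫) * N x := by field_simp
      _ ≤ dualNorm N w * N x := mul_le_mul_of_nonneg_right h2 h.le

lemma abs_inner_le_dual (hN : IsNorm N) {c : ℝ} (hc : 0 < c) (hcl : ∀ x, c * ‖x‖ ≤ N x)
    (w x : Euc d) : |⟪w, x⟫| ≤ dualNorm N w * N x := by
  rw [abs_le]
  refine ⟨?_, inner_le_dual hN hc hcl w x⟩
  have h := inner_le_dual hN hc hcl w (-x)
  rw [inner_neg_right, N_neg hN] at h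
  linarith

lemma dual_sub (hN : IsNorm N) {c : ℝ} (hc : 0 < c) (hcl : ∀ x, c * ‖x‖ ≤ N x)
    (w w' : Euc d) : dualNorm N (w - w') ≤ dualNorm N w + dualNorm N w' := by
  refine csSup_le ⟨0, dual_setNE hN _⟩ fun r hr => ?_
  obtain ⟨x, hx, rfl⟩ := hr
  have h1 : ⟪w - w', x⟫ = ⟪w, x⟫ + ⟪w', -x⟫ := by
    rw [inner_sub_left, inner_neg_right]; ring
  rw [h1]
  have h2 := inner_le_dual hN hc hcl w x
  have h3 := inner_le_dual hN hc hcl w' (-x)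
  rw [N_neg hN] at h3
  have h4 := dual_nonneg hN hc hcl w
  have h5 := dual_nonneg hN hc hcl w'
  have h6 := N_nonneg hN x
  nlinarith

open scoped ENNReal NNReal

lemma well_transfer {D : Measure (Euc d × ℝ)} [IsProbabilityMeasure D]
    {g : Euc d → ℝ} (hgm : Measurable g) (hg01 : ∀ x, g x ∈ Set.Icc (0:ℝ) 1)
    (hy : ∀ᵐ p ∂D, p.2 = 0 ∨ p.2 = 1)
    (hwell : ∀ A : Set (Euc d), MeasurableSet A →
      ∫ p in Prod.fst ⁻¹' A, p.2 ∂D = ∫ p in Prod.fst ⁻¹' A, g p.1 ∂D)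
    (f : Euc d → ℝ) (hf : Measurable f) :
    ∫ p, f p.1 * p.2 ∂D = ∫ p, f p.1 * g p.1 ∂D := by
  have hy0 : ∀ᵐ p ∂D, 0 ≤ p.2 := hy.mono (by rintro p (h | h) <;> simp [h])
  have hy1 : ∀ᵐ p ∂D, |p.2| ≤ 1 := hy.mono (by rintro p (h | h) <;> simp [h])
  set μ₁ := D.withDensity (fun p => ((Real.toNNReal p.2 : ℝ≥0) : ℝ≥0∞)) with hμ₁
  set μ₂ := D.withDensity (fun p => ((Real.toNNReal (g p.1) : ℝ≥0) : ℝ≥0∞)) with hμ₂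
  have hmeq : μ₁.map Prod.fst = μ₂.map Prod.fst := by
    ext A hA
    rw [Measure.map_apply measurable_fst hA, Measure.map_apply measurable_fst hA, hμ₁, hμ₂,
      withDensity_apply _ (hA.preimage measurable_fst),
      withDensity_apply _ (hA.preimage measurable_fst)]
    have hint1 : Integrable (fun p : Euc d × ℝ => p.2) (D.restrict (Prod.fst ⁻¹' A)) := by
      refine Integrable.mono' (integrable_const 1) measurable_snd.aestronglyMeasurable ?_
      exact ae_restrict_of_ae (hy1.mono fun p h => by simpa using h)
    have hint2 : Integrable (fun p : Euc d × ℝ => g p.1) (D.restrict (Prod.fst ⁻¹' A)) := by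
      refine Integrable.mono' (integrable_const 1) (hgm.comp measurable_fst).aestronglyMeasurable ?_
      refine Filter.Eventually.of_forall fun p => ?_
      rw [Real.norm_eq_abs, abs_le]
      refine ⟨by linarith [(hg01 p.1).1], (hg01 p.1).2⟩
    have e1 : ∫⁻ p in Prod.fst ⁻¹' A, ((Real.toNNReal p.2 : ℝ≥0) : ℝ≥0∞) ∂D
        = ENNReal.ofReal (∫ p in Prod.fst ⁻¹' A, p.2 ∂D) :=
      (ofReal_integral_eq_lintegral_ofReal hint1 (ae_restrict_of_ae hy0)).symm
    have e2 : ∫⁻ p in Prod.fst ⁻¹' A, ((Real.toNNReal (g p.1) : ℝ≥0) : ℝ≥0∞) ∂D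
        = ENNReal.ofReal (∫ p in Prod.fst ⁻¹' A, g p.1 ∂D) :=
      (ofReal_integral_eq_lintegral_ofReal hint2
        (Filter.Eventually.of_forall fun p => (hg01 p.1).1)).symm
    rw [e1, e2, hwell A hA]
  have h1 : ∫ p, f p.1 * p.2 ∂D = ∫ p, f p.1 ∂μ₁ := by
    rw [hμ₁, integral_withDensity_eq_integral_smul measurable_snd.real_toNNReal
      (fun p : Euc d × ℝ => f p.1)]
    refine integral_congr_ae (hy0.mono fun p h => ?_)
    simp [NNReal.smul_def, Real.coe_toNNReal p.2 h, mul_comm]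
  have h2 : ∫ p, f p.1 * g p.1 ∂D = ∫ p, f p.1 ∂μ₂ := by
    rw [hμ₂, integral_withDensity_eq_integral_smul (show Measurable fun p : Euc d × ℝ => g p.1 from hgm.comp measurable_fst).real_toNNReal
      (fun p : Euc d × ℝ => f p.1)]
    refine integral_congr_ae (Filter.Eventually.of_forall fun p => ?_)
    simp [NNReal.smul_def, Real.coe_toNNReal _ (hg01 p.1).1, mul_comm]
  rw [h1, h2, ← integral_map measurable_fst.aemeasurable hf.aestronglyMeasurable,
    ← integral_map measurable_fst.aemeasurable hf.aestronglyMeasurable, hmeq]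

set_option maxHeartbeats 1000000 in
set_option synthInstance.maxHeartbeats 200000 in
/-- Gradient-domination (first-order form) for the generalized linear model:
under the regularity assumptions on the link `σ` and well-specification of the model, for every
`w` in the dual-norm ball of radius `B`, the excess population risk is bounded by
`(B·C_σ/c_σ)·‖∇L_D(w)‖`. -/
theorem glm_gradient_domination_first_order {d : ℕ} (N : Euc d → ℝ) (hN : IsNorm N)
    (R B Cσ cσ : ℝ) (hR : 0 ≤ R) (hB : 0 ≤ B)
    (σ : ℝ → ℝ) (hσrange : ∀ s, σ s ∈ Set.Icc (0 : ℝ) 1)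
    (hσd1 : Differentiable ℝ σ) (hσd2 : Differentiable ℝ (deriv σ))
    (hCσ : 1 ≤ Cσ)
    (hub : ∀ s ∈ Set.Icc (-(B * R)) (B * R), deriv σ s ≤ Cσ ∧ deriv (deriv σ) s ≤ Cσ)
    (hcσ : 0 < cσ) (hlb : ∀ s ∈ Set.Icc (-(B * R)) (B * R), cσ ≤ deriv σ s)
    (D : Measure (Euc d × ℝ)) [IsProbabilityMeasure D]
    (hsupp : ∀ᵐ p ∂D, N p.1 ≤ R ∧ (p.2 = 0 ∨ p.2 = 1))
    (wstar : Euc d) (hws : dualNorm N wstar ≤ B)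
    (hwell : ∀ A : Set (Euc d), MeasurableSet A →
      ∫ p in Prod.fst ⁻¹' A, p.2 ∂D = ∫ p in Prod.fst ⁻¹' A, σ ⟪wstar, p.1⟫ ∂D)
    (LD : Euc d → ℝ) (hLD : LD = fun w => ∫ p, (σ ⟪w, p.1⟫ - p.2) ^ 2 ∂D) :
    ∀ w : Euc d, dualNorm N w ≤ B →
      LD w - LD wstar ≤ (B * Cσ / cσ) * N (gradient LD w) := by
  intro w hw
  obtain ⟨c, hc, hcl⟩ := N_lower hN
  have hσc : Continuous σ := hσd1.continuous
  have hσ'c : Continuous (deriv σ) := hσd2.continuous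
  have hRc : 0 ≤ R / c := div_nonneg hR hc.le
  -- master a.e. facts
  have hmaster : ∀ᵐ p ∂D, ‖p.1‖ ≤ R / c ∧ (p.2 = 0 ∨ p.2 = 1) ∧
      |⟪w, p.1⟫| ≤ B * R ∧ |⟪wstar, p.1⟫| ≤ B * R := by
    filter_upwards [hsupp] with p hp
    have hNx := hp.1
    have hN0 := N_nonneg hN p.1
    refine ⟨?_, hp.2, ?_, ?_⟩
    · rw [le_div_iff₀ hc]; have := hcl p.1; linarith
    · have h1 := abs_inner_le_dual hN hc hcl w p.1
      have h2 := dual_nonneg hN hc hcl w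
      nlinarith
    · have h1 := abs_inner_le_dual hN hc hcl wstar p.1
      have h2 := dual_nonneg hN hc hcl wstar
      nlinarith
  -- bound on |σ t - y|
  have hσy : ∀ (t : ℝ) (y : ℝ), y = 0 ∨ y = 1 → |σ t - y| ≤ 1 := by
    rintro t y (rfl | rfl) <;> · have := hσrange t; rw [abs_le]; constructor <;>
      simp at this ⊢ <;> linarith [this.1, this.2]
  -- integrability helper
  have hIb : ∀ (f : Euc d × ℝ → ℝ), AEStronglyMeasurable f D → ∀ M : ℝ,
      (∀ᵐ p ∂D, |f p| ≤ M) → Integrable f D := fun f hm M hb =>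
    Integrable.mono' (integrable_const M) hm (hb.mono fun p h => by simpa using h)
  -- sup of |deriv σ| on the relevant compact interval
  set ρ : ℝ := (‖w‖ + 1) * (R / c) with hρdef
  have hρ0 : 0 ≤ ρ := mul_nonneg (by positivity) hRc
  obtain ⟨s₀, hs₀mem, hs₀max⟩ := (isCompact_Icc (a := -ρ) (b := ρ)).exists_isMaxOn
    (Set.nonempty_Icc.2 (by linarith)) ((continuous_abs.comp hσ'c).continuousOn)
  set K : ℝ := |deriv σ s₀| with hKdef
  have hK0 : 0 ≤ K := abs_nonneg _
  have hKbd : ∀ s ∈ Set.Icc (-ρ) ρ, |deriv σ s| ≤ K := fun s hs => hs₀max hs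
  -- scalar coefficient and derivative formula
  set κ : Euc d → (Euc d × ℝ) → ℝ :=
    fun v p => 2 * (σ ⟪v, p.1⟫ - p.2) * deriv σ ⟪v, p.1⟫ with hκdef
  have hder : ∀ (v : Euc d) (p : Euc d × ℝ),
      HasFDerivAt (fun u : Euc d => (σ ⟪u, p.1⟫ - p.2) ^ 2)
        (κ v p • (innerSL ℝ p.1 : Euc d →L[ℝ] ℝ)) v := by
    intro v p
    have h1 : HasFDerivAt (fun u : Euc d => ⟪u, p.1⟫) (innerSL ℝ p.1 : Euc d →L[ℝ] ℝ) v := by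
      have he : (fun u : Euc d => ⟪u, p.1⟫) = fun u => (innerSL ℝ p.1 : Euc d →L[ℝ] ℝ) u := by
        funext u; rw [innerSL_apply_apply]; exact real_inner_comm p.1 u
      rw [he]; exact (innerSL ℝ p.1 : Euc d →L[ℝ] ℝ).hasFDerivAt
    have h2 : HasDerivAt σ (deriv σ ⟪v, p.1⟫) ⟪v, p.1⟫ := (hσd1 _).hasDerivAt
    have h3 := (h2.comp_hasFDerivAt v h1).sub_const p.2
    have h4 := (hasDerivAt_pow 2 ((σ ∘ fun u : Euc d => ⟪u, p.1⟫) v - p.2)).comp_hasFDerivAt v h3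
    convert h4 using 1
    · rfl
    · rfl
    · rfl
    · rfl
    rw [hκdef, smul_smul]
    congr 1
    simp only [Function.comp]
    ring
  -- the candidate Fréchet derivative is integrable and serves as dominated bound
  have hκbound : ∀ᵐ p ∂D, ∀ v ∈ Metric.ball w 1,
      ‖κ v p • (innerSL ℝ p.1 : Euc d →L[ℝ] ℝ)‖ ≤ 2 * K * (R / c) := by
    filter_upwards [hmaster] with p hp v hv
    have hxn := hp.1
    have hx0 : (0:ℝ) ≤ ‖p.1‖ := norm_nonneg _
    have hv1 : ‖v‖ ≤ ‖w‖ + 1 := by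
      have := mem_ball_iff_norm.mp hv
      have h2 := norm_sub_norm_le v w
      linarith
    have ht : |⟪v, p.1⟫| ≤ ρ := by
      have h1 := abs_real_inner_le_norm v p.1
      have : ‖v‖ * ‖p.1‖ ≤ (‖w‖ + 1) * (R / c) :=
        mul_le_mul hv1 hxn hx0 (by positivity)
      rw [hρdef]; linarith
    have hσ'b : |deriv σ ⟪v, p.1⟫| ≤ K := hKbd _ (abs_le.mp ht)
    have hsy : |σ ⟪v, p.1⟫ - p.2| ≤ 1 := hσy _ _ hp.2.1
    have hns : ‖κ v p • (innerSL ℝ p.1 : Euc d →L[ℝ] ℝ)‖ = ‖κ v p‖ * ‖p.1‖ := by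
      rw [norm_smul (κ v p) (innerSL ℝ p.1 : Euc d →L[ℝ] ℝ), innerSL_apply_norm]
    rw [hns]
    have hκb : |κ v p| ≤ 2 * K := by
      rw [hκdef]
      simp only [abs_mul, abs_two]
      calc 2 * |σ ⟪v, p.1⟫ - p.2| * |deriv σ ⟪v, p.1⟫| ≤ 2 * 1 * K := by
            apply mul_le_mul _ hσ'b (abs_nonneg _) (by norm_num)
            nlinarith [abs_nonneg (σ ⟪v, p.1⟫ - p.2)]
        _ = 2 * K := by ring
    calc ‖κ v p‖ * ‖p.1‖ ≤ (2 * K) * (R / c) := by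
          rw [Real.norm_eq_abs]
          exact mul_le_mul hκb hxn hx0 (by positivity)
      _ = 2 * K * (R / c) := by ring
  have hF'cont : Continuous (fun p : Euc d × ℝ => κ w p • (innerSL ℝ p.1 : Euc d →L[ℝ] ℝ)) := by
    apply Continuous.smul (f := fun p : Euc d × ℝ => κ w p) (g := fun p : Euc d × ℝ => (innerSL ℝ p.1 : Euc d →L[ℝ] ℝ))
    · rw [hκdef]
      exact ((continuous_const.mul ((hσc.comp (Continuous.inner continuous_const
          continuous_fst)).sub continuous_snd))).mul
        (hσ'c.comp (Continuous.inner continuous_const continuous_fst))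
    · exact (innerSL ℝ : Euc d →L[ℝ] Euc d →L[ℝ] ℝ).continuous.comp continuous_fst
  have hF'int : Integrable (fun p : Euc d × ℝ => κ w p • (innerSL ℝ p.1 : Euc d →L[ℝ] ℝ)) D := by
    refine Integrable.mono' (integrable_const (2 * K * (R / c)))
      hF'cont.aestronglyMeasurable ?_
    filter_upwards [hκbound] with p hp
    exact hp w (Metric.mem_ball_self one_pos)
  -- differentiation under the integral sign
  have hFcont : ∀ v : Euc d, Continuous (fun p : Euc d × ℝ => (σ ⟪v, p.1⟫ - p.2) ^ 2) :=
    fun v => ((hσc.comp (Continuous.inner continuous_const continuous_fst)).sub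
        continuous_snd).pow 2
  have hFint : Integrable (fun p : Euc d × ℝ => (σ ⟪w, p.1⟫ - p.2) ^ 2) D := by
    refine hIb _ (hFcont w).aestronglyMeasurable 1 ?_
    filter_upwards [hmaster] with p hp
    have := hσy ⟪w, p.1⟫ p.2 hp.2.1
    rw [abs_le] at this ⊢
    constructor <;> nlinarith [this.1, this.2]
  have hFD0 : HasFDerivAt (fun v : Euc d => ∫ p, (σ ⟪v, p.1⟫ - p.2) ^ 2 ∂D)
      (∫ p, κ w p • (innerSL ℝ p.1 : Euc d →L[ℝ] ℝ) ∂D) w := by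
    exact hasFDerivAt_integral_of_dominated_of_fderiv_le
      (F := fun (v : Euc d) (p : Euc d × ℝ) => (σ ⟪v, p.1⟫ - p.2) ^ 2)
      (F' := fun (v : Euc d) (p : Euc d × ℝ) => κ v p • (innerSL ℝ p.1 : Euc d →L[ℝ] ℝ))
      (bound := fun _ => 2 * K * (R / c)) (s := Metric.ball w 1) (Metric.ball_mem_nhds w one_pos)
      (Filter.Eventually.of_forall fun v => (hFcont v).aestronglyMeasurable)
      hFint hF'cont.aestronglyMeasurable hκbound (integrable_const _)
      (Filter.Eventually.of_forall fun p v _ => hder v p)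
  have hFD : HasFDerivAt LD (∫ p, κ w p • (innerSL ℝ p.1 : Euc d →L[ℝ] ℝ) ∂D) w := by
    rw [hLD]; exact hFD0
  -- the gradient pairing formula
  set v : Euc d := w - wstar with hvdef
  have hgradv : ⟪gradient LD w, v⟫ = ∫ p, κ w p * ⟪p.1, v⟫ ∂D := by
    have hG : HasGradientAt LD ((InnerProductSpace.toDual ℝ (Euc d)).symm
        (∫ p, κ w p • (innerSL ℝ p.1 : Euc d →L[ℝ] ℝ) ∂D)) w :=
      hasFDerivAt_iff_hasGradientAt.mp hFD
    rw [hG.gradient, InnerProductSpace.toDual_symm_apply,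
      ContinuousLinearMap.integral_apply hF'int v]
    refine integral_congr_ae (Filter.Eventually.of_forall fun p => ?_)
    simp [innerSL_apply_apply]
  -- abbreviations for the two link values
  have hy : ∀ᵐ p ∂D, p.2 = 0 ∨ p.2 = 1 := hsupp.mono fun p h => h.2
  have hwsm : Measurable fun x : Euc d => σ ⟪wstar, x⟫ :=
    (hσc.comp (Continuous.inner continuous_const continuous_id)).measurable
  have hg01 : ∀ x : Euc d, σ ⟪wstar, x⟫ ∈ Set.Icc (0:ℝ) 1 := fun x => hσrange _
  have habsσ : ∀ t t' : ℝ, |σ t - σ t'| ≤ 1 := by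
    intro t t'
    have h1 := hσrange t; have h2 := hσrange t'
    rw [abs_le]; exact ⟨by linarith [h1.1, h2.2], by linarith [h1.2, h2.1]⟩
  set q : Euc d × ℝ → ℝ := fun p => (σ ⟪w, p.1⟫ - σ ⟪wstar, p.1⟫) ^ 2 with hqdef
  have hqcont : Continuous q := by
    rw [hqdef]
    exact ((hσc.comp (Continuous.inner continuous_const continuous_fst)).sub
      (hσc.comp (Continuous.inner continuous_const continuous_fst))).pow 2
  have hqint : Integrable q D := by
    refine hIb _ hqcont.aestronglyMeasurable 1 (Filter.Eventually.of_forall fun p => ?_)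
    simp only [hqdef]
    rw [abs_le]
    have := habsσ ⟪w, p.1⟫ ⟪wstar, p.1⟫
    rw [abs_le] at this
    constructor <;> nlinarith [this.1, this.2]
  set f₁ : Euc d → ℝ := fun x => 2 * (σ ⟪w, x⟫ - σ ⟪wstar, x⟫) with hf₁def
  have hf₁c : Continuous f₁ := by
    rw [hf₁def]
    exact continuous_const.mul ((hσc.comp (Continuous.inner continuous_const continuous_id)).sub
      (hσc.comp (Continuous.inner continuous_const continuous_id)))
  have hf₁b : ∀ x, |f₁ x| ≤ 2 := by
    intro x
    simp only [hf₁def]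
    rw [abs_mul, abs_two]
    have := habsσ ⟪w, x⟫ ⟪wstar, x⟫
    nlinarith [abs_nonneg (σ ⟪w, x⟫ - σ ⟪wstar, x⟫)]
  have hint_fb : Integrable (fun p : Euc d × ℝ => f₁ p.1 * σ ⟪wstar, p.1⟫) D := by
    refine hIb _ (hf₁c.comp continuous_fst |>.mul
      (hσc.comp (Continuous.inner continuous_const continuous_fst))).aestronglyMeasurable 2
      (Filter.Eventually.of_forall fun p => ?_)
    rw [abs_mul]
    have h1 := hf₁b p.1
    have h2 := hg01 p.1
    have h3 : |σ ⟪wstar, p.1⟫| ≤ 1 := abs_le.mpr ⟨by linarith [h2.1], h2.2⟩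
    nlinarith [abs_nonneg (f₁ p.1), abs_nonneg (σ ⟪wstar, p.1⟫)]
  have hint_fy : Integrable (fun p : Euc d × ℝ => f₁ p.1 * p.2) D := by
    refine hIb _ ((hf₁c.comp continuous_fst).mul continuous_snd).aestronglyMeasurable 2 ?_
    filter_upwards [hy] with p hp
    rw [abs_mul]
    have h1 := hf₁b p.1
    have h3 : |p.2| ≤ 1 := by rcases hp with h | h <;> simp [h]
    nlinarith [abs_nonneg (f₁ p.1), abs_nonneg p.2]
  have hFint_ws : Integrable (fun p : Euc d × ℝ => (σ ⟪wstar, p.1⟫ - p.2) ^ 2) D := by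
    refine hIb _ (hFcont wstar).aestronglyMeasurable 1 ?_
    filter_upwards [hy] with p hp
    have := hσy ⟪wstar, p.1⟫ p.2 hp
    rw [abs_le] at this ⊢
    constructor <;> nlinarith [this.1, this.2]
  have key1 : LD w - LD wstar = ∫ p, q p ∂D := by
    rw [hLD]
    show (∫ p, (σ ⟪w, p.1⟫ - p.2) ^ 2 ∂D) - ∫ p, (σ ⟪wstar, p.1⟫ - p.2) ^ 2 ∂D = _
    rw [← integral_sub hFint hFint_ws]
    have he : (fun p : Euc d × ℝ => (σ ⟪w, p.1⟫ - p.2) ^ 2 - (σ ⟪wstar, p.1⟫ - p.2) ^ 2)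
        = fun p => (q p + f₁ p.1 * σ ⟪wstar, p.1⟫) - f₁ p.1 * p.2 := by
      funext p; simp only [hqdef, hf₁def]; ring
    have hqfb : Integrable (fun p : Euc d × ℝ => q p + f₁ p.1 * σ ⟪wstar, p.1⟫) D :=
      hqint.add hint_fb
    rw [he, integral_sub hqfb hint_fy, integral_add hqint hint_fb,
      well_transfer hwsm hg01 hy hwell f₁ hf₁c.measurable]
    ring
  -- the second function to transfer
  set f₂ : Euc d → ℝ := fun x => 2 * deriv σ ⟪w, x⟫ * ⟪x, v⟫ with hf₂def
  have hf₂c : Continuous f₂ := by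
    rw [hf₂def]
    exact (continuous_const.mul (hσ'c.comp (Continuous.inner continuous_const
      continuous_id))).mul (Continuous.inner continuous_id continuous_const)
  set M₂ : ℝ := 2 * Cσ * ((R / c) * ‖v‖) with hM₂def
  have hf₂b : ∀ᵐ p ∂D, |f₂ p.1| ≤ M₂ := by
    filter_upwards [hmaster] with p hp
    have hsmem : ⟪w, p.1⟫ ∈ Set.Icc (-(B * R)) (B * R) := by
      have := abs_le.mp hp.2.2.1; exact ⟨this.1, this.2⟩
    have h1 := hlb _ hsmem
    have h2 := (hub _ hsmem).1
    have h3 : |deriv σ ⟪w, p.1⟫| ≤ Cσ := abs_le.mpr ⟨by linarith, h2⟩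
    have h4 : |⟪p.1, v⟫| ≤ (R / c) * ‖v‖ := by
      refine (abs_real_inner_le_norm p.1 v).trans ?_
      exact mul_le_mul_of_nonneg_right hp.1 (norm_nonneg v)
    simp only [hf₂def, hM₂def, abs_mul, abs_two]
    have h5 : (0:ℝ) ≤ |⟪p.1, v⟫| := abs_nonneg _
    nlinarith [abs_nonneg (deriv σ ⟪w, p.1⟫)]
  have hM₂0 : 0 ≤ M₂ := by
    rw [hM₂def]; positivity
  have hint2w : Integrable (fun p : Euc d × ℝ => f₂ p.1 * σ ⟪w, p.1⟫) D := by
    refine hIb _ ((hf₂c.comp continuous_fst).mul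
      (hσc.comp (Continuous.inner continuous_const continuous_fst))).aestronglyMeasurable M₂ ?_
    filter_upwards [hf₂b] with p hp
    rw [abs_mul]
    have h2 := hσrange ⟪w, p.1⟫
    have h3 : |σ ⟪w, p.1⟫| ≤ 1 := abs_le.mpr ⟨by linarith [h2.1], h2.2⟩
    nlinarith [abs_nonneg (f₂ p.1), abs_nonneg (σ ⟪w, p.1⟫)]
  have hint2b : Integrable (fun p : Euc d × ℝ => f₂ p.1 * σ ⟪wstar, p.1⟫) D := by
    refine hIb _ ((hf₂c.comp continuous_fst).mul
      (hσc.comp (Continuous.inner continuous_const continuous_fst))).aestronglyMeasurable M₂ ?_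
    filter_upwards [hf₂b] with p hp
    rw [abs_mul]
    have h2 := hg01 p.1
    have h3 : |σ ⟪wstar, p.1⟫| ≤ 1 := abs_le.mpr ⟨by linarith [h2.1], h2.2⟩
    nlinarith [abs_nonneg (f₂ p.1), abs_nonneg (σ ⟪wstar, p.1⟫)]
  have hint2y : Integrable (fun p : Euc d × ℝ => f₂ p.1 * p.2) D := by
    refine hIb _ ((hf₂c.comp continuous_fst).mul continuous_snd).aestronglyMeasurable M₂ ?_
    filter_upwards [hf₂b, hy] with p hp hyp
    rw [abs_mul]
    have h3 : |p.2| ≤ 1 := by rcases hyp with h | h <;> simp [h]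
    nlinarith [abs_nonneg (f₂ p.1), abs_nonneg p.2]
  have hint2d : Integrable (fun p : Euc d × ℝ => f₂ p.1 * (σ ⟪w, p.1⟫ - σ ⟪wstar, p.1⟫)) D := by
    refine hIb _ ((hf₂c.comp continuous_fst).mul
      ((hσc.comp (Continuous.inner continuous_const continuous_fst)).sub
        (hσc.comp (Continuous.inner continuous_const continuous_fst)))).aestronglyMeasurable M₂ ?_
    filter_upwards [hf₂b] with p hp
    rw [abs_mul]
    have h3 := habsσ ⟪w, p.1⟫ ⟪wstar, p.1⟫
    nlinarith [abs_nonneg (f₂ p.1), abs_nonneg (σ ⟪w, p.1⟫ - σ ⟪wstar, p.1⟫)]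
  have key2 : ⟪gradient LD w, v⟫ = ∫ p, f₂ p.1 * (σ ⟪w, p.1⟫ - σ ⟪wstar, p.1⟫) ∂D := by
    rw [hgradv]
    have he : (fun p : Euc d × ℝ => κ w p * ⟪p.1, v⟫)
        = fun p => f₂ p.1 * σ ⟪w, p.1⟫ - f₂ p.1 * p.2 := by
      funext p; simp only [hκdef, hf₂def]; ring
    rw [he, integral_sub hint2w hint2y,
      well_transfer hwsm hg01 hy hwell f₂ hf₂c.measurable, ← integral_sub hint2w hint2b]
    congr 1; funext p; ring
  -- mean value theorem
  have hMVT : ∀ s s' : ℝ, |s| ≤ B * R → |s'| ≤ B * R →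
      ∃ ξ, ξ ∈ Set.Icc (-(B * R)) (B * R) ∧ σ s - σ s' = deriv σ ξ * (s - s') := by
    intro s s' hs hs'
    rw [abs_le] at hs hs'
    rcases lt_trichotomy s s' with h | h | h
    · obtain ⟨ξ, hξ, hd⟩ := exists_deriv_eq_slope σ h hσc.continuousOn
        (hσd1.differentiableOn)
      refine ⟨ξ, ⟨by linarith [hξ.1], by linarith [hξ.2]⟩, ?_⟩
      rw [hd]
      have hne : s' - s ≠ 0 := sub_ne_zero.2 (ne_of_gt (by linarith))
      field_simp
      ring
    · exact ⟨s, ⟨by linarith, by linarith⟩, by rw [h]; ring⟩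
    · obtain ⟨ξ, hξ, hd⟩ := exists_deriv_eq_slope σ h hσc.continuousOn
        (hσd1.differentiableOn)
      refine ⟨ξ, ⟨by linarith [hξ.1], by linarith [hξ.2]⟩, ?_⟩
      rw [hd]
      have hne : s - s' ≠ 0 := sub_ne_zero.2 (ne_of_gt (by linarith))
      field_simp
  -- pointwise a.e. gradient-domination inequality
  have hpt : ∀ᵐ p ∂D, 2 * cσ * q p ≤ Cσ * (f₂ p.1 * (σ ⟪w, p.1⟫ - σ ⟪wstar, p.1⟫)) := by
    filter_upwards [hmaster] with p hp
    obtain ⟨ξ, hξmem, hξ⟩ := hMVT ⟪w, p.1⟫ ⟪wstar, p.1⟫ hp.2.2.1 hp.2.2.2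
    have hsmem : ⟪w, p.1⟫ ∈ Set.Icc (-(B * R)) (B * R) := by
      have := abs_le.mp hp.2.2.1; exact ⟨this.1, this.2⟩
    have h1 := hlb _ hsmem
    have h2 := (hub _ hsmem).1
    have h3 := hlb _ hξmem
    have h4 := (hub _ hξmem).1
    have hiv : ⟪p.1, v⟫ = ⟪w, p.1⟫ - ⟪wstar, p.1⟫ := by
      rw [hvdef, inner_sub_right, real_inner_comm p.1 w, real_inner_comm p.1 wstar]
    simp only [hqdef, hf₂def]
    rw [hiv, hξ]
    have hdξ0 : 0 ≤ deriv σ ξ := le_trans hcσ.le h3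
    have hA : deriv σ ξ * deriv σ ξ ≤ Cσ * deriv σ ξ := mul_le_mul_of_nonneg_right h4 hdξ0
    have hB : cσ * (Cσ * deriv σ ξ) ≤ deriv σ ⟪w, p.1⟫ * (Cσ * deriv σ ξ) :=
      mul_le_mul_of_nonneg_right h1 (mul_nonneg (by linarith) hdξ0)
    have key : 2 * cσ * (deriv σ ξ) ^ 2 ≤ 2 * Cσ * (deriv σ ⟪w, p.1⟫ * deriv σ ξ) := by
      nlinarith [mul_le_mul_of_nonneg_left hA hcσ.le]
    nlinarith [mul_le_mul_of_nonneg_right key (sq_nonneg (⟪w, p.1⟫ - ⟪wstar, p.1⟫))]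
  -- put everything together
  have hmono := integral_mono_ae (hqint.const_mul (2 * cσ)) (hint2d.const_mul Cσ) hpt
  rw [integral_const_mul, integral_const_mul] at hmono
  have hNg0 := N_nonneg hN (gradient LD w)
  have hdualv : dualNorm N v ≤ 2 * B := by
    rw [hvdef]
    have := dual_sub hN hc hcl w wstar
    linarith
  have hpair : ⟪gradient LD w, v⟫ ≤ 2 * B * N (gradient LD w) := by
    have h := inner_le_dual hN hc hcl v (gradient LD w)
    calc ⟪gradient LD w, v⟫ = ⟪v, gradient LD w⟫ := real_inner_comm _ _
      _ ≤ dualNorm N v * N (gradient LD w) := h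
      _ ≤ 2 * B * N (gradient LD w) := mul_le_mul_of_nonneg_right hdualv hNg0
  have hfin : 2 * cσ * (LD w - LD wstar) ≤ Cσ * (2 * B * N (gradient LD w)) := by
    rw [key1]
    calc 2 * cσ * ∫ p, q p ∂D ≤ Cσ * ∫ p, f₂ p.1 * (σ ⟪w, p.1⟫ - σ ⟪wstar, p.1⟫) ∂D := hmono
      _ = Cσ * ⟪gradient LD w, v⟫ := by rw [key2]
      _ ≤ Cσ * (2 * B * N (gradient LD w)) :=
          mul_le_mul_of_nonneg_left hpair (by linarith)
  rw [div_mul_eq_mul_div, le_div_iff₀ hcσ]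
  nlinarith [hfin]
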